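/- For a p-variable P_k (k null) and the BH rejection count R_𝒟, for each r ∈ {1,…,K}: E[1{P_k ≤ αR_𝒟/K}·1{R_𝒟 ≤ r}] ≤ α·r/K; combined with the FDP decomposition this yields FDR ≤ (αK₀/K)·Σ_{r=1}^K 1/r. -/

import Mathlib

open MeasureTheory ProbabilityTheory Finset
open scoped ENNReal Classical

noncomputable section

/-- The `i`-th smallest value (0-indexed) among `p 0, …, p (K-1)`. -/
def sortAsc {K : ℕ} (p : Fin K → ℝ) : Fin K → ℝ := p ∘ Tuple.sort p

/-- The `i`-th largest value (0-indexed) among `e 0, …, e (K-1)`. -/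
def sortDesc {K : ℕ} (e : Fin K → ℝ) : Fin K → ℝ := e ∘ Tuple.sort (fun j => -e j)

/-- `k* = max {k : K p_(k) / k ≤ α}` (with `max ∅ = 0`), the BH rejection count. -/
def bhCount (K : ℕ) (α : ℝ) (p : Fin K → ℝ) : ℕ :=
  (univ.filter (fun i : Fin K => (K : ℝ) * sortAsc p i / (i.1 + 1) ≤ α)).sup
    (fun i => i.1 + 1)

/-- The BH procedure rejects the hypotheses carrying the `k*` smallest p-values. -/
def bhRejects (K : ℕ) (α : ℝ) (p : Fin K → ℝ) : Finset (Fin K) :=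
  univ.filter (fun k => ∃ i : Fin K, i.1 + 1 ≤ bhCount K α p ∧ p k ≤ sortAsc p i)

/-- `k* = max {k : k e_[k] / K ≥ 1/α}`, the e-BH rejection count. -/
def ebhCount (K : ℕ) (α : ℝ) (e : Fin K → ℝ) : ℕ :=
  (univ.filter (fun i : Fin K => 1 / α ≤ (i.1 + 1) * sortDesc e i / K)).sup
    (fun i => i.1 + 1)

/-- The e-BH procedure rejects the hypotheses carrying the `k*` largest e-values. -/
def ebhRejects (K : ℕ) (α : ℝ) (e : Fin K → ℝ) : Finset (Fin K) :=
  univ.filter (fun k => ∃ i : Fin K, i.1 + 1 ≤ ebhCount K α e ∧ sortDesc e i ≤ e k)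

/-- Simes function `S_K(p) = min_k (K/k) p_(k)`. -/
def simes (K : ℕ) (p : Fin K → ℝ) : ℝ := ⨅ i : Fin K, (K : ℝ) / (i.1 + 1) * sortAsc p i

/-- Harmonic number `ℓ_K = ∑_{k=1}^K 1/k`. -/
def harm (K : ℕ) : ℝ := ∑ k ∈ Finset.Icc 1 K, (1 : ℝ) / k

/-- An increasing (upper) subset of `ℝ^K`. -/
def IncreasingSet {K : ℕ} (A : Set (Fin K → ℝ)) : Prop := ∀ x ∈ A, ∀ y, x ≤ y → y ∈ A

/-- Positive regression dependence on the subset `N` of nulls. -/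
def PRDS {Ω : Type*} [MeasurableSpace Ω] (μ : Measure Ω) {K : ℕ}
    (P : Fin K → Ω → ℝ) (N : Finset (Fin K)) : Prop :=
  ∀ k ∈ N, ∀ A : Set (Fin K → ℝ), MeasurableSet A → IncreasingSet A →
    Monotone (fun x : ℝ => μ[|{ω | P k ω ≤ x}] {ω | (fun j => P j ω) ∈ A})

/-- False discovery proportion of a rejection set `D` w.r.t. the null set `N`. -/
def fdp {K : ℕ} (D N : Finset (Fin K)) : ℝ := ((D ∩ N).card : ℝ) / (max D.card 1 : ℕ)

end

namespace ByTermAux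

noncomputable def a (K r : ℕ) : ℝ := if r < K then 1 / r - 1 / (r + 1) else 1 / K

lemma a_nonneg {K r : ℕ} (hr : 1 ≤ r) : 0 ≤ a K r := by
  unfold a
  split
  · have h0 : (0 : ℝ) < r := by exact_mod_cast hr
    have : (1 : ℝ) / (r + 1) ≤ 1 / r := by
      apply one_div_le_one_div_of_le h0; linarith
    linarith
  · positivity

lemma sum_a_aux (K : ℕ) : ∀ n m : ℕ, 1 ≤ m → m + n = K →
    ∑ r ∈ Finset.Icc m K, a K r = 1 / m := by
  intro n
  induction n with
  | zero =>
    intro m h1 h2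
    have : m = K := by omega
    subst this
    rw [Finset.Icc_self, Finset.sum_singleton]
    unfold a
    rw [if_neg (lt_irrefl _)]
  | succ n ih =>
    intro m h1 h2
    have hmK : m < K := by omega
    have hins : Finset.Icc m K = insert m (Finset.Icc (m + 1) K) := by
      rw [← Finset.Ioc_insert_left hmK.le, Finset.Icc_add_one_left_eq_Ioc]
    rw [hins, Finset.sum_insert (by simp), ih (m + 1) (by omega) (by omega)]
    unfold a
    rw [if_pos hmK]
    push_cast
    ring

lemma sum_a {K m : ℕ} (h1 : 1 ≤ m) (h2 : m ≤ K) :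
    ∑ r ∈ Finset.Icc m K, a K r = 1 / m :=
  sum_a_aux K (K - m) m h1 (by omega)

lemma sum_ra (K : ℕ) : ∑ r ∈ Finset.Icc 1 K, (r : ℝ) * a K r = harm K := by
  have h1 : ∀ r ∈ Finset.Icc 1 K, (r : ℝ) * a K r = ∑ _m ∈ Finset.Icc 1 r, a K r := by
    intro r _
    rw [Finset.sum_const, Nat.card_Icc, nsmul_eq_mul]
    norm_num
  rw [Finset.sum_congr rfl h1,
    Finset.sum_comm' (t' := Finset.Icc 1 K) (s' := fun m => Finset.Icc m K)
      (by intro r m; simp only [Finset.mem_Icc]; omega)]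
  unfold harm
  apply Finset.sum_congr rfl
  intro m hm
  rw [Finset.mem_Icc] at hm
  exact sum_a hm.1 hm.2

end ByTermAux

/-- For a null p-variable `P_k` and the BH rejection count `R`, for each `r ∈ {1,…,K}`,
`E[1_{P_k ≤ αR/K} 1_{R ≤ r}] ≤ α r / K`; combined with the FDP decomposition this yields
`FDR ≤ (α K₀ / K) ∑_{r=1}^K 1/r`. -/
theorem by_term_bound_and_fdr
    {Ω : Type*} [MeasurableSpace Ω] (μ : Measure Ω) [IsProbabilityMeasure μ]
    {K : ℕ} (hK : 0 < K) {α : ℝ} (hα : α ∈ Set.Ioo (0 : ℝ) 1)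
    (P : Fin K → Ω → ℝ) (hP : ∀ k, Measurable (P k)) (N : Finset (Fin K))
    (h_pvar : ∀ k ∈ N, ∀ x ∈ Set.Ioo (0 : ℝ) 1, μ {ω | P k ω ≤ x} ≤ ENNReal.ofReal x) :
    (∀ k ∈ N, ∀ r ∈ Finset.Icc 1 K,
      ∫ ω, (if P k ω ≤ α * (bhRejects K α (fun j => P j ω)).card / K then (1 : ℝ) else 0) *
          (if (bhRejects K α (fun j => P j ω)).card ≤ r then (1 : ℝ) else 0) ∂μ ≤
        α * r / K) ∧
    ∫ ω, ((N.filter (fun k =>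
          P k ω ≤ α * (bhRejects K α (fun j => P j ω)).card / K)).card : ℝ) /
        (max (bhRejects K α (fun j => P j ω)).card 1 : ℕ) ∂μ ≤
      α * N.card / K * harm K := by
  obtain ⟨hα0, hα1⟩ := hα
  have hK0 : (0 : ℝ) < K := by exact_mod_cast hK
  -- basic facts
  have hcIoo : ∀ r : ℕ, r ∈ Finset.Icc 1 K → α * r / K ∈ Set.Ioo (0 : ℝ) 1 := by
    intro r hr
    rw [Finset.mem_Icc] at hr
    have hr1 : (1 : ℝ) ≤ r := by exact_mod_cast hr.1
    have hrK : (r : ℝ) ≤ K := by exact_mod_cast hr.2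
    constructor
    · positivity
    · have : α * r / K ≤ α := by
        rw [div_le_iff₀ hK0]; nlinarith
      linarith
  have hmeas : ∀ (k : Fin K) (c : ℝ), MeasurableSet {ω | P k ω ≤ c} := fun k c =>
    measurableSet_le (hP k) measurable_const
  have hint : ∀ (k : Fin K) (c : ℝ),
      Integrable ({ω | P k ω ≤ c}.indicator fun _ => (1 : ℝ)) μ :=
    fun k c => (integrable_const 1).indicator (hmeas k c)
  have hIval : ∀ (k : Fin K) (c : ℝ),
      ∫ ω, ({ω | P k ω ≤ c}.indicator fun _ => (1 : ℝ)) ω ∂μ = (μ {ω | P k ω ≤ c}).toReal := by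
    intro k c
    rw [integral_indicator_const (1 : ℝ) (hmeas k c), smul_eq_mul, mul_one]
    rfl
  have hIbd : ∀ k ∈ N, ∀ r ∈ Finset.Icc 1 K,
      (μ {ω | P k ω ≤ α * r / K}).toReal ≤ α * r / K := by
    intro k hk r hr
    exact ENNReal.toReal_le_of_le_ofReal (hcIoo r hr).1.le
      (h_pvar k hk _ (hcIoo r hr))
  -- the bhRejects cardinality is at most K
  have hcard : ∀ ω : Ω, (bhRejects K α (fun j => P j ω)).card ≤ K := fun ω => by
    simpa using Finset.card_le_univ (bhRejects K α (fun j => P j ω))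
  constructor
  · -- Part 1
    intro k hk r hr
    obtain ⟨hr1, hrK⟩ := Finset.mem_Icc.mp hr
    set c := α * r / K with hc
    have hle : ∀ ω,
        (if P k ω ≤ α * (bhRejects K α (fun j => P j ω)).card / K then (1 : ℝ) else 0) *
          (if (bhRejects K α (fun j => P j ω)).card ≤ r then (1 : ℝ) else 0) ≤
        ({ω | P k ω ≤ c}.indicator fun _ => (1 : ℝ)) ω := by
      intro ω
      set R := (bhRejects K α (fun j => P j ω)).card with hR
      by_cases h1 : P k ω ≤ α * R / K
      · by_cases h2 : R ≤ r
        · have hRr : (R : ℝ) ≤ r := by exact_mod_cast h2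
          have hmem : ω ∈ {ω | P k ω ≤ c} := by
            have : α * R / K ≤ α * r / K := by
              gcongr
            exact Set.mem_setOf_eq ▸ le_trans h1 this
          rw [if_pos h1, if_pos h2, Set.indicator_of_mem hmem]
          norm_num
        · rw [if_neg h2, mul_zero]
          exact Set.indicator_nonneg (fun _ _ => zero_le_one) ω
      · rw [if_neg h1, zero_mul]
        exact Set.indicator_nonneg (fun _ _ => zero_le_one) ω
    calc ∫ ω, (if P k ω ≤ α * (bhRejects K α (fun j => P j ω)).card / K then (1 : ℝ) else 0) *
          (if (bhRejects K α (fun j => P j ω)).card ≤ r then (1 : ℝ) else 0) ∂μ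
        ≤ ∫ ω, ({ω | P k ω ≤ c}.indicator fun _ => (1 : ℝ)) ω ∂μ := by
          apply integral_mono_of_nonneg ?_ (hint k c) (Filter.Eventually.of_forall hle)
          apply Filter.Eventually.of_forall
          intro ω
          positivity
      _ = (μ {ω | P k ω ≤ c}).toReal := hIval k c
      _ ≤ c := hIbd k hk r hr
  · -- Part 2
    set h : Ω → ℝ := fun ω => ∑ k ∈ N, ∑ r ∈ Finset.Icc 1 K,
      ByTermAux.a K r * ({ω | P k ω ≤ α * r / K}.indicator (fun _ => (1 : ℝ)) ω) with hh
    have hhint : Integrable h μ := by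
      apply integrable_finset_sum
      intro k _
      apply integrable_finset_sum
      intro r _
      exact (hint k _).const_mul _
    have hpt : ∀ ω, ((N.filter (fun k =>
          P k ω ≤ α * (bhRejects K α (fun j => P j ω)).card / K)).card : ℝ) /
        (max (bhRejects K α (fun j => P j ω)).card 1 : ℕ) ≤ h ω := by
      intro ω
      set R := (bhRejects K α (fun j => P j ω)).card with hR
      set m := max R 1 with hm
      have hm1 : 1 ≤ m := le_max_right _ _
      have hmK : m ≤ K := max_le (hcard ω) hK
      have hcast : ((N.filter (fun k => P k ω ≤ α * R / K)).card : ℝ) =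
          ∑ k ∈ N, (if P k ω ≤ α * R / K then (1 : ℝ) else 0) := by
        rw [Finset.card_filter]
        push_cast
        apply Finset.sum_congr rfl
        intro k _
        split <;> norm_num
      rw [hcast, Finset.sum_div]
      apply Finset.sum_le_sum
      intro k _
      by_cases hQ : P k ω ≤ α * R / K
      · rw [if_pos hQ]
        have key : (1 : ℝ) / m = ∑ r ∈ Finset.Icc m K, ByTermAux.a K r :=
          (ByTermAux.sum_a hm1 hmK).symm
        have step1 : ∑ r ∈ Finset.Icc m K, ByTermAux.a K r =
            ∑ r ∈ Finset.Icc m K,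
              ByTermAux.a K r * ({ω | P k ω ≤ α * r / K}.indicator (fun _ => (1 : ℝ)) ω) := by
          apply Finset.sum_congr rfl
          intro r hrmem
          rw [Finset.mem_Icc] at hrmem
          have hRr : (R : ℝ) ≤ r := by
            have : R ≤ r := le_trans (le_max_left _ _) hrmem.1
            exact_mod_cast this
          have hmem : ω ∈ {ω | P k ω ≤ α * r / K} := by
            have : α * R / K ≤ α * r / K := by
              gcongr
            exact Set.mem_setOf_eq ▸ le_trans hQ this
          rw [Set.indicator_of_mem hmem, mul_one]
        have step2 : ∑ r ∈ Finset.Icc m K,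
              ByTermAux.a K r * ({ω | P k ω ≤ α * r / K}.indicator (fun _ => (1 : ℝ)) ω) ≤
            ∑ r ∈ Finset.Icc 1 K,
              ByTermAux.a K r * ({ω | P k ω ≤ α * r / K}.indicator (fun _ => (1 : ℝ)) ω) := by
          apply Finset.sum_le_sum_of_subset_of_nonneg
          · exact Finset.Icc_subset_Icc hm1 le_rfl
          · intro r hr _
            rw [Finset.mem_Icc] at hr
            exact mul_nonneg (ByTermAux.a_nonneg hr.1)
              (Set.indicator_nonneg (fun _ _ => zero_le_one) ω)
        calc (1 : ℝ) / (m : ℕ) = ∑ r ∈ Finset.Icc m K, ByTermAux.a K r := key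
          _ ≤ _ := step1.le.trans step2
      · rw [if_neg hQ, zero_div]
        apply Finset.sum_nonneg
        intro r hr
        rw [Finset.mem_Icc] at hr
        exact mul_nonneg (ByTermAux.a_nonneg hr.1)
          (Set.indicator_nonneg (fun _ _ => zero_le_one) ω)
    have hnn : ∀ ω, (0 : ℝ) ≤ ((N.filter (fun k =>
          P k ω ≤ α * (bhRejects K α (fun j => P j ω)).card / K)).card : ℝ) /
        (max (bhRejects K α (fun j => P j ω)).card 1 : ℕ) := by
      intro ω
      positivity
    calc ∫ ω, ((N.filter (fun k =>
          P k ω ≤ α * (bhRejects K α (fun j => P j ω)).card / K)).card : ℝ) /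
        (max (bhRejects K α (fun j => P j ω)).card 1 : ℕ) ∂μ
        ≤ ∫ ω, h ω ∂μ := integral_mono_of_nonneg (Filter.Eventually.of_forall hnn) hhint
            (Filter.Eventually.of_forall hpt)
      _ = ∑ k ∈ N, ∑ r ∈ Finset.Icc 1 K,
            ByTermAux.a K r * (μ {ω | P k ω ≤ α * r / K}).toReal := by
          rw [hh, integral_finset_sum _ (fun k _ => integrable_finset_sum _
            (fun r _ => (hint k _).const_mul _))]
          apply Finset.sum_congr rfl
          intro k _
          rw [integral_finset_sum _ (fun r _ => (hint k _).const_mul _)]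
          apply Finset.sum_congr rfl
          intro r _
          rw [integral_const_mul, hIval k _]
      _ ≤ ∑ k ∈ N, ∑ r ∈ Finset.Icc 1 K, ByTermAux.a K r * (α * r / K) := by
          apply Finset.sum_le_sum
          intro k hk
          apply Finset.sum_le_sum
          intro r hr
          have hr1 : 1 ≤ r := (Finset.mem_Icc.mp hr).1
          exact mul_le_mul_of_nonneg_left (hIbd k hk r hr) (ByTermAux.a_nonneg hr1)
      _ = α * N.card / K * harm K := by
          rw [Finset.sum_const]
          · rw [nsmul_eq_mul]
            have : ∑ r ∈ Finset.Icc 1 K, ByTermAux.a K r * (α * r / K) =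
                α / K * ∑ r ∈ Finset.Icc 1 K, (r : ℝ) * ByTermAux.a K r := by
              rw [Finset.mul_sum]
              apply Finset.sum_congr rfl
              intro r _
              ring
            rw [this, ByTermAux.sum_ra]
            ring
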